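/- Let n = 2k and m ≥ k. If F is an (n,m)-function with the maximal number 2^m - 2^{m-k} of bent components, then the algebraic degree of F is at most k. -/

import Mathlib

open Finset

def chr (b : ZMod 2) : ℤ := if b = 0 then 1 else -1

def ip {n : ℕ} (a b : Fin n → ZMod 2) : ZMod 2 := ∑ i, a i * b i

def walshV {n : ℕ} (f : (Fin n → ZMod 2) → ZMod 2) (l : Fin n → ZMod 2) : ℤ :=
  ∑ x, chr (f x + ip l x)

/-- `f` is bent on `F_2^{2k}`: all Walsh values are `±2^k`. -/
def IsBentV {n : ℕ} (k : ℕ) (f : (Fin n → ZMod 2) → ZMod 2) : Prop :=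
  ∀ l, walshV f l = 2 ^ k ∨ walshV f l = -(2 ^ k)

/-- The algebraic degree (of the algebraic normal form) of `f` is at most `d`. -/
def DegLE {n : ℕ} (f : (Fin n → ZMod 2) → ZMod 2) (d : ℕ) : Prop :=
  ∃ c : Finset (Fin n) → ZMod 2,
    (∀ S : Finset (Fin n), c S ≠ 0 → S.card ≤ d) ∧
    ∀ x, f x = ∑ S : Finset (Fin n), c S * ∏ i ∈ S, x i

lemma zmod2_cases (a : ZMod 2) : a = 0 ∨ a = 1 := by revert a; decide

lemma vadd_self {n : ℕ} (w : Fin n → ZMod 2) : w + w = 0 :=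
  funext fun i => CharTwo.add_self_eq_zero (w i)

lemma chr_add (a b : ZMod 2) : chr (a + b) = chr a * chr b := by
  rcases zmod2_cases a with h|h <;> rcases zmod2_cases b with h'|h' <;> subst h <;> subst h' <;> decide

lemma chr_add_one (a : ZMod 2) : chr (a + 1) = - chr a := by
  rcases zmod2_cases a with h|h <;> subst h <;> decide

lemma ip_add_left {n : ℕ} (a b x : Fin n → ZMod 2) : ip (a + b) x = ip a x + ip b x := by
  simp [ip, add_mul, Finset.sum_add_distrib]

lemma ip_add_right {n : ℕ} (l a b : Fin n → ZMod 2) : ip l (a + b) = ip l a + ip l b := by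
  simp [ip, mul_add, Finset.sum_add_distrib]

lemma ip_single {n : ℕ} (j : Fin n) (x : Fin n → ZMod 2) :
    ip (Pi.single j 1) x = x j := by
  simp [ip, Pi.single_apply, ite_mul]

lemma ip_single_right {n : ℕ} (l : Fin n → ZMod 2) (j : Fin n) :
    ip l (Pi.single j 1) = l j := by
  simp [ip, Pi.single_apply, mul_ite]

def supp {n : ℕ} (x : Fin n → ZMod 2) : Finset (Fin n) := univ.filter (fun i => x i = 1)

lemma mem_supp {n : ℕ} (x : Fin n → ZMod 2) (i : Fin n) : i ∈ supp x ↔ x i = 1 := by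
  simp [supp]

lemma supp_eq_iff {n : ℕ} (x y : Fin n → ZMod 2) : supp x = supp y ↔ x = y := by
  constructor
  · intro h; funext i
    have := Finset.ext_iff.mp h i
    simp [mem_supp] at this
    rcases zmod2_cases (x i) with h'|h' <;> rcases zmod2_cases (y i) with h''|h'' <;>
      simp_all
  · rintro rfl; rfl

lemma prod_eq_ite {n : ℕ} (S : Finset (Fin n)) (x : Fin n → ZMod 2) :
    (∏ i ∈ S, x i) = if S ⊆ supp x then 1 else 0 := by
  by_cases h : S ⊆ supp x
  · rw [if_pos h]
    exact Finset.prod_eq_one (fun i hi => (mem_supp x i).mp (h hi))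
  · rw [if_neg h]
    obtain ⟨i, hiS, hix⟩ := not_subset.mp h
    rw [mem_supp] at hix
    have : x i = 0 := by rcases zmod2_cases (x i) with h'|h' <;> simp_all
    exact Finset.prod_eq_zero hiS this

def cube {n : ℕ} (S : Finset (Fin n)) : Finset (Fin n → ZMod 2) :=
  univ.filter (fun y => supp y ⊆ S)

def anf {n : ℕ} (f : (Fin n → ZMod 2) → ZMod 2) (S : Finset (Fin n)) : ZMod 2 :=
  ∑ y ∈ cube S, f y

lemma anf_inversion {n : ℕ} (f : (Fin n → ZMod 2) → ZMod 2) (x : Fin n → ZMod 2) :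
    f x = ∑ S : Finset (Fin n), anf f S * ∏ i ∈ S, x i := by
  have key : ∀ S : Finset (Fin n), anf f S * ∏ i ∈ S, x i
      = ∑ y : Fin n → ZMod 2, (if supp y ⊆ S ∧ S ⊆ supp x then f y else 0) := by
    intro S
    rw [anf, cube, Finset.sum_filter, prod_eq_ite, Finset.sum_mul]
    congr 1; funext y
    by_cases h1 : supp y ⊆ S <;> by_cases h2 : S ⊆ supp x <;> simp [h1, h2]
  rw [Finset.sum_congr rfl (fun S _ => key S), Finset.sum_comm]
  have key2 : ∀ y : Fin n → ZMod 2,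
      (∑ S : Finset (Fin n), if supp y ⊆ S ∧ S ⊆ supp x then f y else 0)
        = if y = x then f y else 0 := by
    intro y
    rw [← Finset.sum_filter]
    have hfil : (univ.filter (fun S => supp y ⊆ S ∧ S ⊆ supp x))
        = Finset.Icc (supp y) (supp x) := by
      ext S; simp [Finset.mem_Icc, Finset.le_iff_subset]
    rw [hfil, Finset.sum_const, nsmul_eq_mul]
    by_cases hyx : y = x
    · subst hyx
      rw [Finset.card_Icc_finset (subset_refl _)]
      simp
    · rw [if_neg hyx]
      by_cases hsub : supp y ⊆ supp x
      · have hne : supp y ≠ supp x := fun h => hyx ((supp_eq_iff y x).mp h)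
        have hlt : (supp y).card < (supp x).card :=
          Finset.card_lt_card (lt_of_le_of_ne hsub hne)
        rw [Finset.card_Icc_finset hsub]
        have h1 : 1 ≤ (supp x).card - (supp y).card := by omega
        have : (((2:ℕ) ^ ((supp x).card - (supp y).card) : ℕ) : ZMod 2) = 0 := by
          rcases Nat.exists_eq_add_of_le h1 with ⟨c, hc⟩
          have h2 : ((2:ℕ):ZMod 2) = 0 := by decide
          rw [hc, pow_add, pow_one, Nat.cast_mul, h2, zero_mul]
        rw [this, zero_mul]
      · rw [Finset.Icc_eq_empty (by simpa [Finset.le_iff_subset] using hsub)]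
        simp
  rw [Finset.sum_congr rfl (fun y _ => key2 y)]
  simp

/-- Pairing/involution lemma: if a set is closed under adding `e_i` and `g` flips by 1,
the chr-sum vanishes. -/
lemma sum_chr_flip {n : ℕ} (E : Finset (Fin n → ZMod 2)) (g : (Fin n → ZMod 2) → ZMod 2)
    (i : Fin n) (hE : ∀ x ∈ E, x + Pi.single i 1 ∈ E)
    (hg : ∀ x, g (x + Pi.single i 1) = g x + 1) :
    ∑ x ∈ E, chr (g x) = 0 := by
  apply Finset.sum_involution (fun x _ => x + Pi.single i 1)
  · intro x hx
    rw [hg x, chr_add_one]; ring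
  · intro x hx _
    intro h
    have := congrFun h i
    simp at this
  · intro x hx
    funext j
    by_cases hj : j = i <;> simp [hj]
    · subst hj; rcases zmod2_cases (x j) with h|h <;> rw [h] <;> decide
  · intro x hx; exact hE x hx

lemma sum_chr_ip_univ {n : ℕ} (z : Fin n → ZMod 2) :
    (∑ l : Fin n → ZMod 2, chr (ip l z)) = if z = 0 then 2 ^ n else 0 := by
  by_cases hz : z = 0
  · subst hz
    rw [if_pos rfl]
    have : ∀ l : Fin n → ZMod 2, chr (ip l 0) = 1 := by
      intro l; simp [ip, chr]
    rw [Finset.sum_congr rfl (fun l _ => this l), Finset.sum_const, Finset.card_univ]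
    simp [Fintype.card_fun]
  · rw [if_neg hz]
    have : ∃ i, z i = 1 := by
      by_contra h
      push_neg at h
      apply hz
      funext i
      rcases zmod2_cases (z i) with h'|h'
      · exact h'
      · exact absurd h' (h i)
    obtain ⟨i, hi⟩ := this
    exact sum_chr_flip univ (fun l => ip l z) i (fun x _ => Finset.mem_univ _)
      (fun l => by show ip (l + Pi.single i 1) z = ip l z + 1
                   rw [ip_add_left, ip_single, hi])

lemma walsh_inversion {n : ℕ} (f : (Fin n → ZMod 2) → ZMod 2) (x : Fin n → ZMod 2) :
    (∑ l : Fin n → ZMod 2, walshV f l * chr (ip l x)) = 2 ^ n * chr (f x) := by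
  have step : ∀ l : Fin n → ZMod 2, walshV f l * chr (ip l x)
      = ∑ y : Fin n → ZMod 2, chr (f y) * chr (ip l (y + x)) := by
    intro l
    rw [walshV, Finset.sum_mul]
    congr 1; funext y
    rw [chr_add, ip_add_right, chr_add]
    ring
  rw [Finset.sum_congr rfl (fun l _ => step l), Finset.sum_comm]
  have step2 : ∀ y : Fin n → ZMod 2,
      (∑ l : Fin n → ZMod 2, chr (f y) * chr (ip l (y + x)))
        = chr (f y) * (if y + x = 0 then 2 ^ n else 0) := by
    intro y
    rw [← Finset.mul_sum, sum_chr_ip_univ]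
  rw [Finset.sum_congr rfl (fun y _ => step2 y)]
  have hyx : ∀ y : Fin n → ZMod 2, (y + x = 0) ↔ y = x := by
    intro y
    constructor
    · intro h
      have h2 : y + x + x = 0 + x := by rw [h]
      rwa [add_assoc, vadd_self, add_zero, zero_add] at h2
    · rintro rfl; exact vadd_self _
  have : ∀ y : Fin n → ZMod 2, chr (f y) * (if y + x = 0 then (2:ℤ) ^ n else 0)
      = if y = x then 2 ^ n * chr (f y) else 0 := by
    intro y
    by_cases h : y = x
    · rw [if_pos ((hyx y).mpr h), if_pos h]; ring
    · rw [if_neg (fun hh => h ((hyx y).mp hh)), if_neg h, mul_zero]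
  rw [Finset.sum_congr rfl (fun y _ => this y), Finset.sum_ite_eq' univ x]
  simp

lemma card_cube {n : ℕ} (S : Finset (Fin n)) : (cube S).card = 2 ^ S.card := by
  classical
  have himg : cube S = Finset.image
      (fun g : (↥S → ZMod 2) => (fun i => if h : i ∈ S then g ⟨i, h⟩ else 0)) univ := by
    ext x
    simp only [cube, Finset.mem_filter, Finset.mem_univ, true_and, Finset.mem_image]
    constructor
    · intro hx
      refine ⟨fun i => x i.1, ?_⟩
      funext i
      by_cases h : i ∈ S
      · simp [h]
      · simp only [dif_neg h]
        rcases zmod2_cases (x i) with h'|h'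
        · exact h'.symm
        · exact absurd (hx ((mem_supp x i).mpr h')) h
    · rintro ⟨g, rfl⟩
      intro i hi
      rw [mem_supp] at hi
      by_contra h
      simp [dif_neg h] at hi
  rw [himg, Finset.card_image_of_injective _ ?_, Finset.card_univ, Fintype.card_fun]
  · simp
  · intro g g' h
    funext i
    have := congrFun h i.1
    simpa [dif_pos i.2] using this

lemma bent_anf_zero {k : ℕ} (hk : 2 ≤ k) (f : (Fin (2 * k) → ZMod 2) → ZMod 2)
    (hf : IsBentV k f) (S : Finset (Fin (2 * k))) (hS : k < S.card) :
    anf f S = 0 := by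
  classical
  set E := cube S with hE
  set L : Finset (Fin (2 * k) → ZMod 2) := univ.filter (fun l => ∀ i ∈ S, l i = 0) with hL
  -- inner sum over E of chr (ip l x)
  have inner : ∀ l : Fin (2 * k) → ZMod 2,
      (∑ x ∈ E, chr (ip l x)) = if l ∈ L then (2:ℤ) ^ S.card else 0 := by
    intro l
    by_cases hl : l ∈ L
    · rw [if_pos hl]
      rw [hL, Finset.mem_filter] at hl
      have : ∀ x ∈ E, chr (ip l x) = 1 := by
        intro x hx
        rw [hE, cube, Finset.mem_filter] at hx
        have : ip l x = 0 := by
          rw [ip]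
          apply Finset.sum_eq_zero
          intro i _
          by_cases hi : i ∈ S
          · rw [hl.2 i hi, zero_mul]
          · have : x i = 0 := by
              rcases zmod2_cases (x i) with h'|h'
              · exact h'
              · exact absurd (hx.2 ((mem_supp x i).mpr h')) hi
            rw [this, mul_zero]
        rw [this]; rfl
      rw [Finset.sum_congr rfl this, Finset.sum_const, hE, card_cube]
      simp
    · rw [if_neg hl]
      rw [hL, Finset.mem_filter] at hl
      push_neg at hl
      obtain ⟨i, hiS, hli⟩ := hl (Finset.mem_univ l)
      have hli1 : l i = 1 := by
        rcases zmod2_cases (l i) with h'|h' <;> simp_all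
      apply sum_chr_flip E (fun x => ip l x) i
      · intro x hx
        rw [hE, cube, Finset.mem_filter] at hx ⊢
        refine ⟨Finset.mem_univ _, ?_⟩
        intro j hj
        rw [mem_supp] at hj
        by_cases hji : j = i
        · subst hji; exact hiS
        · apply hx.2
          rw [mem_supp]
          simpa [Pi.single_apply, hji] using hj
      · intro x
        show ip l (x + Pi.single i 1) = ip l x + 1
        rw [ip_add_right, ip_single_right, hli1]
  -- main identity
  have main : (2:ℤ) ^ (2 * k) * (∑ x ∈ E, chr (f x))
      = 2 ^ S.card * ∑ l ∈ L, walshV f l := by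
    calc (2:ℤ) ^ (2 * k) * (∑ x ∈ E, chr (f x))
        = ∑ x ∈ E, (2:ℤ) ^ (2 * k) * chr (f x) := by rw [Finset.mul_sum]
      _ = ∑ x ∈ E, ∑ l : Fin (2 * k) → ZMod 2, walshV f l * chr (ip l x) := by
          refine Finset.sum_congr rfl fun x _ => ?_
          rw [walsh_inversion]
      _ = ∑ l : Fin (2 * k) → ZMod 2, ∑ x ∈ E, walshV f l * chr (ip l x) :=
          Finset.sum_comm
      _ = ∑ l : Fin (2 * k) → ZMod 2, walshV f l * ∑ x ∈ E, chr (ip l x) := by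
          refine Finset.sum_congr rfl fun l _ => ?_
          rw [Finset.mul_sum]
      _ = ∑ l : Fin (2 * k) → ZMod 2, (if l ∈ L then walshV f l * 2 ^ S.card else 0) := by
          refine Finset.sum_congr rfl fun l _ => ?_
          rw [inner l]
          by_cases hl : l ∈ L <;> simp [hl]
      _ = ∑ l ∈ L, walshV f l * 2 ^ S.card := by
          rw [Finset.sum_ite_mem, Finset.univ_inter]
      _ = 2 ^ S.card * ∑ l ∈ L, walshV f l := by
          rw [Finset.mul_sum]
          exact Finset.sum_congr rfl fun l _ => mul_comm _ _
  -- notation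
  set s := S.card with hs
  have hs2k : s ≤ 2 * k := by
    have := Finset.card_le_univ S
    simpa using this
  -- epsilon values
  set ε : (Fin (2 * k) → ZMod 2) → ℤ := fun l => if walshV f l = 2 ^ k then 1 else -1 with heps
  have hW : ∀ l, walshV f l = 2 ^ k * ε l := by
    intro l
    rcases hf l with h|h
    · rw [heps]; simp only [if_pos h]; rw [h]; ring
    · have hne : walshV f l ≠ 2 ^ k := by
        rw [h]; intro hh
        have : (2:ℤ) ^ k > 0 := by positivity
        omega
      rw [heps]; simp only [if_neg hne]; rw [h]; ring
  -- card of L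
  have hLcard : L.card = 2 ^ (2 * k - s) := by
    have : L = cube Sᶜ := by
      ext l
      simp only [hL, cube, Finset.mem_filter, Finset.mem_univ, true_and]
      constructor
      · intro h i hi
        rw [mem_supp] at hi
        rw [Finset.mem_compl]
        intro hiS
        rw [h i hiS] at hi
        exact absurd hi (by decide)
      · intro h i hiS
        rcases zmod2_cases (l i) with h'|h'
        · exact h'
        · exact absurd (Finset.mem_compl.mp (h ((mem_supp l i).mpr h'))) (fun hh => hh hiS)
    rw [this, card_cube, Finset.card_compl]
    congr 1
    simp [hs]
  -- Σ and its parity relation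
  set Sg : ℤ := ∑ l ∈ L, ε l with hSg
  have hsumW : (∑ l ∈ L, walshV f l) = 2 ^ k * Sg := by
    rw [hSg, Finset.mul_sum]
    exact Finset.sum_congr rfl fun l _ => hW l
  -- D = 2^s - 2 * N1
  set N1 := (E.filter (fun x => f x = 1)).card with hN1
  have hD : (∑ x ∈ E, chr (f x)) = 2 ^ s - 2 * N1 := by
    have : ∀ x ∈ E, chr (f x) = 1 - 2 * (if f x = 1 then (1:ℤ) else 0) := by
      intro x _
      rcases zmod2_cases (f x) with h|h <;> rw [h] <;> decide
    rw [Finset.sum_congr rfl this, Finset.sum_sub_distrib, ← Finset.mul_sum,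
      Finset.sum_boole, Finset.sum_const, hE, card_cube]
    push_cast [hN1, hE]
    ring
  -- the integer equation
  have hkey : (2:ℤ) ^ s - 2 * N1 = 2 ^ (s - k) * Sg := by
    have h1 : (2:ℤ) ^ (2 * k) * (2 ^ s - 2 * N1) = 2 ^ (2 * k) * (2 ^ (s - k) * Sg) := by
      rw [← hD, main, hsumW]
      have : (2:ℤ) ^ s * 2 ^ k = 2 ^ (2 * k) * 2 ^ (s - k) := by
        rw [← pow_add, ← pow_add]
        congr 1
        omega
      rw [← mul_assoc, this, mul_assoc]
    exact mul_left_cancel₀ (by positivity) h1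
  -- parity of Sg
  have hSgpar : s - k = 1 → (2:ℤ) ∣ Sg := by
    intro ht
    have hcast : ((Sg : ℤ) : ZMod 2) = 0 := by
      rw [hSg]
      push_cast
      have : ∀ l ∈ L, ((ε l : ℤ) : ZMod 2) = 1 := by
        intro l _
        rw [heps]
        by_cases h : walshV f l = 2 ^ k
        · simp [h]
        · simp only [if_neg h]; decide
      rw [Finset.sum_congr rfl this, Finset.sum_const, nsmul_eq_mul, mul_one, hLcard]
      have h2k : 2 * k - s = k - 1 := by omega
      rw [h2k]
      have hk1 : 1 ≤ k - 1 := by omega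
      rcases Nat.exists_eq_add_of_le hk1 with ⟨c, hc⟩
      rw [hc]
      push_cast
      rw [pow_add, pow_one]
      have : ((2:ℕ) : ZMod 2) = 0 := by decide
      push_cast at this
      rw [this]
      ring
    exact (ZMod.intCast_zmod_eq_zero_iff_dvd Sg 2).mp hcast
  -- 2 ∣ N1
  have hN1even : 2 ∣ N1 := by
    have h4 : (4:ℤ) ∣ 2 ^ s - 2 ^ (s - k) * Sg := by
      have hs3 : 3 ≤ s := by omega
      have d1 : (4:ℤ) ∣ 2 ^ s := by
        rcases Nat.exists_eq_add_of_le hs3 with ⟨c, hc⟩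
        rw [hc]
        exact ⟨2 ^ (1 + c), by ring⟩
      have d2 : (4:ℤ) ∣ 2 ^ (s - k) * Sg := by
        by_cases ht : s - k = 1
        · obtain ⟨c, hc⟩ := hSgpar ht
          rw [ht, hc, pow_one]
          exact ⟨c, by ring⟩
        · have ht2 : 2 ≤ s - k := by omega
          rcases Nat.exists_eq_add_of_le ht2 with ⟨c, hc⟩
          rw [hc]
          exact ⟨2 ^ c * Sg, by ring⟩
      exact dvd_sub d1 d2
    have heq : (2:ℤ) * N1 = 2 ^ s - 2 ^ (s - k) * Sg := by linarith [hkey]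
    have : (4:ℤ) ∣ 2 * (N1:ℤ) := by rw [heq]; exact h4
    have h2 : (2:ℤ) ∣ (N1:ℤ) := by
      obtain ⟨c, hc⟩ := this
      refine ⟨c, ?_⟩
      have : (2:ℤ) * (N1:ℤ) = 2 * (2 * c) := by rw [hc]; ring
      exact mul_left_cancel₀ (by norm_num) this
    exact_mod_cast h2
  -- conclude
  have : anf f S = ((N1 : ℕ) : ZMod 2) := by
    rw [anf, ← hE]
    have : ∀ y ∈ E, f y = if f y = 1 then (1 : ZMod 2) else 0 := by
      intro y _
      rcases zmod2_cases (f y) with h|h <;> rw [h] <;> decide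
    rw [Finset.sum_congr rfl this, Finset.sum_boole, hN1]
  rw [this]
  exact (ZMod.natCast_eq_zero_iff N1 2).mpr hN1even

lemma bent_degLE {k : ℕ} (hk : 2 ≤ k) (f : (Fin (2 * k) → ZMod 2) → ZMod 2)
    (hf : IsBentV k f) : DegLE f k := by
  refine ⟨anf f, ?_, fun x => anf_inversion f x⟩
  intro S hS
  by_contra h
  exact hS (bent_anf_zero hk f hf S (by omega))

lemma degLE_add {n d : ℕ} (f g : (Fin n → ZMod 2) → ZMod 2)
    (hf : DegLE f d) (hg : DegLE g d) : DegLE (fun x => f x + g x) d := by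
  obtain ⟨c, hc, hcf⟩ := hf
  obtain ⟨c', hc', hcg⟩ := hg
  refine ⟨c + c', ?_, ?_⟩
  · intro S hS
    by_cases h : c S = 0
    · apply hc' S
      intro h'
      apply hS
      simp [Pi.add_apply, h, h']
    · exact hc S h
  · intro x
    show f x + g x = _
    rw [hcf x, hcg x, ← Finset.sum_add_distrib]
    exact Finset.sum_congr rfl fun S _ => by simp [Pi.add_apply]; ring

theorem stmt3 (k m : ℕ) (hk : 2 ≤ k) (hm : k ≤ m)
    (F : (Fin (2 * k) → ZMod 2) → (Fin m → ZMod 2))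
    (hmax :
      Nat.card {v : Fin m → ZMod 2 | v ≠ 0 ∧ IsBentV k (fun x => ip v (F x))} =
        2 ^ m - 2 ^ (m - k)) :
    ∀ j : Fin m, DegLE (fun x => F x j) k := by
  classical
  intro j
  set B : Finset (Fin m → ZMod 2) :=
    univ.filter (fun v => v ≠ 0 ∧ IsBentV k (fun x => ip v (F x))) with hB
  have hBcard : B.card = 2 ^ m - 2 ^ (m - k) := by
    rw [← hmax]
    rw [Nat.card_eq_card_toFinset]
    congr 1
    ext v
    simp [hB, Set.mem_toFinset]
  have hmemB : ∀ v, v ∈ B ↔ v ≠ 0 ∧ IsBentV k (fun x => ip v (F x)) := by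
    intro v; simp [hB]
  set ej : Fin m → ZMod 2 := Pi.single j 1 with hej
  have hejne : ej ≠ 0 := by
    intro h
    have := congrFun h j
    simp [hej] at this
  -- goal as ip
  have hgoal : (fun x => F x j) = fun x => ip ej (F x) := by
    funext x
    rw [hej, ip_single]
  rw [hgoal]
  by_cases hejB : ej ∈ B
  · exact bent_degLE hk _ ((hmemB ej).mp hejB).2
  -- find v ∈ B with v + ej ∈ B
  have hex : ∃ v ∈ B, v + ej ∈ B := by
    by_contra hcon
    push_neg at hcon
    set B' := B.image (fun v => v + ej) with hB'
    have hdisj : Disjoint B B' := by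
      rw [Finset.disjoint_right]
      intro w hw hwB
      rw [hB', Finset.mem_image] at hw
      obtain ⟨v, hv, rfl⟩ := hw
      exact hcon v hv hwB
    have hB'card : B'.card = B.card :=
      Finset.card_image_of_injective _ (fun a b h => by
        have : a + ej + ej = b + ej + ej := by rw [h]
        rwa [add_assoc, add_assoc, vadd_self, add_zero, add_zero] at this)
    have h0B : (0 : Fin m → ZMod 2) ∉ B := fun h => ((hmemB 0).mp h).1 rfl
    have h0B' : (0 : Fin m → ZMod 2) ∉ B' := by
      rw [hB', Finset.mem_image]
      rintro ⟨v, hv, hveq⟩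
      have : v = ej := by
        have h2 : v + ej + ej = 0 + ej := by rw [hveq]
        rwa [add_assoc, vadd_self, add_zero, zero_add] at h2
      rw [this] at hv
      exact hejB hv
    -- B ∪ B' ∪ {0} ⊆ univ, disjoint
    have hcard : B.card + B'.card + 1 ≤ 2 ^ m := by
      have hsub : (B ∪ B') ∪ {0} ⊆ univ := Finset.subset_univ _
      have hd2 : Disjoint (B ∪ B') ({0} : Finset (Fin m → ZMod 2)) := by
        rw [Finset.disjoint_left]
        intro w hw hw0
        rw [Finset.mem_singleton] at hw0
        subst hw0
        rcases Finset.mem_union.mp hw with h|h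
        · exact h0B h
        · exact h0B' h
      have := Finset.card_le_card hsub
      rw [Finset.card_union_of_disjoint hd2, Finset.card_union_of_disjoint hdisj,
        Finset.card_singleton, Finset.card_univ, Fintype.card_fun] at this
      simpa using this
    rw [hB'card, hBcard] at hcard
    have hpow : 2 ^ (m - k) * 2 ≤ 2 ^ m := by
      have : 2 ^ (m - k + 1) ≤ 2 ^ m := Nat.pow_le_pow_right (by norm_num) (by omega)
      rwa [pow_succ] at this
    have hpm : 2 ^ (m - k) ≤ 2 ^ m := Nat.pow_le_pow_right (by norm_num) (by omega)
    have hpos : 0 < 2 ^ (m - k) := Nat.pow_pos (by norm_num)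
    omega
  obtain ⟨v, hv, hv'⟩ := hex
  have hdecomp : (fun x => ip ej (F x)) =
      fun x => ip v (F x) + ip (v + ej) (F x) := by
    funext x
    rw [← ip_add_left, ← add_assoc, vadd_self, zero_add]
  rw [hdecomp]
  exact degLE_add _ _ (bent_degLE hk _ ((hmemB v).mp hv).2)
    (bent_degLE hk _ ((hmemB _).mp hv').2)
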